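/- Let p be a prime and G an elementary abelian p-group of rank n (finite, written multiplicatively). Let M := (Additive G) ⊗_ℤ ℤ̂_p[G] be the tensor product over ℤ of the additive group underlying G with the group ring ℤ̂_p[G] of G over the p-adic integers, and let N ⊆ M be the subgroup generated by all elements (g) ⊗ (λ·g) for g ∈ G and λ ∈ ℤ̂_p, where in the second factor g denotes the canonical image of g in ℤ̂_p[G]. Then the quotient group M/N is isomorphic, as an abelian group, to the direct sum ⊕_{g ∈ G} G/⟨g⟩, where ⟨g⟩ denotes the cyclic subgroup generated by g. -/

import Mathlib

open scoped TensorProduct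
set_option linter.unusedSectionVars false

section
variable (p : ℕ) [Fact p.Prime] (G : Type*) [CommGroup G] [Fintype G] [DecidableEq G]

noncomputable def vv (lam : ℤ_[p]) : ℤ := ((PadicInt.toZMod lam).val : ℤ)

/-- projection to the quotient, additively -/
def cg (g : G) : Additive G →+ Additive (G ⧸ Subgroup.zpowers g) :=
  MonoidHom.toAdditive (QuotientGroup.mk' (Subgroup.zpowers g))

abbrev DD := DirectSum G fun g : G => Additive (G ⧸ Subgroup.zpowers g)

theorem zsmul_congr {A : Type*} [AddCommGroup A] (hexp : ∀ a : A, (p:ℤ) • a = 0)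
    {m k : ℤ} (h : (p:ℤ) ∣ m - k) (a : A) : m • a = k • a := by
  obtain ⟨c, hc⟩ := h
  have hm : m = k + p * c := by linarith
  rw [hm, add_smul, mul_smul, hexp, add_zero]

theorem vv_add (x y : ℤ_[p]) : (p:ℤ) ∣ vv p (x + y) - (vv p x + vv p y) := by
  haveI : NeZero p := ⟨(Fact.out : p.Prime).ne_zero⟩
  unfold vv
  rw [map_add, ZMod.val_add]
  obtain ⟨c, hc⟩ := (Nat.mod_modEq ((PadicInt.toZMod x).val + (PadicInt.toZMod y).val) p).dvd
  exact ⟨-c, by push_cast at hc ⊢; linarith⟩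

theorem vv_one : vv p 1 = 1 := by
  have h1 : 1 < p := (Fact.out : p.Prime).one_lt
  simp [vv, ZMod.val_one_eq_one_mod, Nat.mod_eq_of_lt h1]

theorem vv_spec (lam : ℤ_[p]) : ∃ mu : ℤ_[p], lam = ((vv p lam : ℤ) : ℤ_[p]) + p * mu := by
  have h := PadicInt.toZMod_spec lam
  rw [PadicInt.maximalIdeal_eq_span_p, Ideal.mem_span_singleton] at h
  obtain ⟨mu, hmu⟩ := h
  refine ⟨mu, ?_⟩
  have hc : (ZMod.cast (PadicInt.toZMod lam) : ℤ_[p]) = ((vv p lam : ℤ) : ℤ_[p]) := by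
    rw [vv]
    push_cast
    rw [ZMod.natCast_val]
  rw [← hc, ← hmu]
  ring

variable (hexp : ∀ a : Additive G, (p:ℤ) • a = 0)

noncomputable def compHom (g : G) (a : Additive G) : ℤ_[p] →+ DD G where
  toFun lam := DirectSum.of _ g (cg G g (vv p lam • a))
  map_zero' := by simp [vv]
  map_add' x y := by
    have h : vv p (x + y) • a = vv p x • a + vv p y • a := by
      rw [← add_smul]
      exact zsmul_congr p hexp (vv_add p x y) a
    rw [h, map_add, map_add]

noncomputable def innerHom (a : Additive G) : MonoidAlgebra ℤ_[p] G →+ DD G :=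
  (Finsupp.liftAddHom (fun g => compHom p G hexp g a)).comp
    MonoidAlgebra.coeffAddEquiv.toAddMonoidHom

theorem innerHom_single (a : Additive G) (g : G) (lam : ℤ_[p]) :
    innerHom p G hexp a (MonoidAlgebra.single g lam) = DirectSum.of _ g (cg G g (vv p lam • a)) := by
  exact Finsupp.liftAddHom_apply_single (fun g => compHom p G hexp g a) g lam

theorem innerHom_zero : innerHom p G hexp 0 = 0 := by
  apply MonoidAlgebra.addMonoidHom_ext
  intro g lam
  simp [innerHom, Finsupp.liftAddHom_apply_single, compHom]

theorem innerHom_add (a b : Additive G) :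
    innerHom p G hexp (a + b) = innerHom p G hexp a + innerHom p G hexp b := by
  apply MonoidAlgebra.addMonoidHom_ext
  intro g lam
  simp only [AddMonoidHom.add_apply]
  rw [innerHom_single, innerHom_single, innerHom_single]
  rw [smul_add, map_add, map_add]

noncomputable def B2 : Additive G →+ (MonoidAlgebra ℤ_[p] G →ₗ[ℤ] DD G) where
  toFun a := (innerHom p G hexp a).toIntLinearMap
  map_zero' := by
    apply LinearMap.ext; intro f
    have := innerHom_zero p G hexp
    simp only [AddMonoidHom.coe_toIntLinearMap, this]
    rfl
  map_add' a b := by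
    apply LinearMap.ext; intro f
    have := innerHom_add p G hexp a b
    simp only [AddMonoidHom.coe_toIntLinearMap, this]
    rfl

noncomputable def phi : (Additive G ⊗[ℤ] MonoidAlgebra ℤ_[p] G) →ₗ[ℤ] DD G :=
  TensorProduct.lift (B2 p G hexp).toIntLinearMap

theorem phi_tmul (a : Additive G) (g : G) (lam : ℤ_[p]) :
    phi p G hexp (a ⊗ₜ[ℤ] (MonoidAlgebra.single g lam : MonoidAlgebra ℤ_[p] G))
      = DirectSum.of _ g (cg G g (vv p lam • a)) := by
  exact (TensorProduct.lift.tmul _ _).trans (innerHom_single p G hexp a g lam)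
noncomputable def NN : Submodule ℤ (Additive G ⊗[ℤ] MonoidAlgebra ℤ_[p] G) :=
  Submodule.span ℤ
    {x | ∃ (g : G) (lam : ℤ_[p]),
      x = Additive.ofMul g ⊗ₜ[ℤ] (lam • MonoidAlgebra.of ℤ_[p] G g)}

theorem smul_of_eq_single (g : G) (lam : ℤ_[p]) :
    lam • MonoidAlgebra.of ℤ_[p] G g = (MonoidAlgebra.single g lam : MonoidAlgebra ℤ_[p] G) := by
  rw [MonoidAlgebra.of_apply, MonoidAlgebra.smul_single', mul_one]

include hexp in
theorem key (a : Additive G) (g : G) (lam : ℤ_[p]) :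
    (a ⊗ₜ[ℤ] (MonoidAlgebra.single g lam : MonoidAlgebra ℤ_[p] G))
      = vv p lam • (a ⊗ₜ[ℤ] (MonoidAlgebra.single g 1 : MonoidAlgebra ℤ_[p] G)) := by
  obtain ⟨mu, hmu⟩ := vv_spec p lam
  set k := vv p lam with hk
  have h1 : (MonoidAlgebra.single g ((k : ℤ_[p])) : MonoidAlgebra ℤ_[p] G)
      = k • (MonoidAlgebra.single g 1 : MonoidAlgebra ℤ_[p] G) := by
    rw [MonoidAlgebra.smul_single]
    congr 1
    rw [zsmul_eq_mul, mul_one]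
  have h2 : (MonoidAlgebra.single g ((p:ℤ_[p]) * mu) : MonoidAlgebra ℤ_[p] G)
      = (p:ℤ) • (MonoidAlgebra.single g mu : MonoidAlgebra ℤ_[p] G) := by
    rw [MonoidAlgebra.smul_single]
    congr 1
  calc a ⊗ₜ[ℤ] (MonoidAlgebra.single g lam : MonoidAlgebra ℤ_[p] G)
      = a ⊗ₜ[ℤ] ((MonoidAlgebra.single g ((k:ℤ_[p])) : MonoidAlgebra ℤ_[p] G)
          + MonoidAlgebra.single g ((p:ℤ_[p]) * mu)) := by rw [← MonoidAlgebra.single_add, ← hmu]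
    _ = a ⊗ₜ[ℤ] (MonoidAlgebra.single g ((k:ℤ_[p])) : MonoidAlgebra ℤ_[p] G)
          + a ⊗ₜ[ℤ] (MonoidAlgebra.single g ((p:ℤ_[p]) * mu) : MonoidAlgebra ℤ_[p] G) :=
        TensorProduct.tmul_add _ _ _
    _ = k • (a ⊗ₜ[ℤ] (MonoidAlgebra.single g 1 : MonoidAlgebra ℤ_[p] G))
          + ((p:ℤ) • a) ⊗ₜ[ℤ] (MonoidAlgebra.single g mu : MonoidAlgebra ℤ_[p] G) := by
        rw [h1, h2, TensorProduct.tmul_smul, ← TensorProduct.smul_tmul]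
    _ = k • (a ⊗ₜ[ℤ] (MonoidAlgebra.single g 1 : MonoidAlgebra ℤ_[p] G)) := by
        rw [hexp, TensorProduct.zero_tmul, add_zero]

theorem hle : NN p G ≤ LinearMap.ker (phi p G hexp) := by
  rw [NN, Submodule.span_le]
  rintro x ⟨g, lam, rfl⟩
  simp only [SetLike.mem_coe, LinearMap.mem_ker]
  rw [smul_of_eq_single, phi_tmul]
  have h0 : cg G g (Additive.ofMul g) = 0 := by
    have h1 : ((QuotientGroup.mk' (Subgroup.zpowers g)) g) = 1 :=
      (QuotientGroup.eq_one_iff g).mpr (Subgroup.mem_zpowers g)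
    simp [cg, h1]
  have : cg G g (vv p lam • Additive.ofMul g) = 0 := by
    rw [map_zsmul, h0, smul_zero]
  rw [this, map_zero]

noncomputable def phibar :
    ((Additive G ⊗[ℤ] MonoidAlgebra ℤ_[p] G) ⧸ NN p G) →ₗ[ℤ] DD G :=
  Submodule.liftQ (NN p G) (phi p G hexp) (hle p G hexp)

noncomputable def psicomp (g : G) :
    Additive (G ⧸ Subgroup.zpowers g) →+ ((Additive G ⊗[ℤ] MonoidAlgebra ℤ_[p] G) ⧸ NN p G) :=
  MonoidHom.toAdditiveLeft (QuotientGroup.lift (Subgroup.zpowers g)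
    (MonoidHom.mk' (fun x => Multiplicative.ofAdd (Submodule.Quotient.mk
        (Additive.ofMul x ⊗ₜ[ℤ] (MonoidAlgebra.single g 1 : MonoidAlgebra ℤ_[p] G)))) (by
      intro x y
      rw [ofMul_mul, TensorProduct.add_tmul, Submodule.Quotient.mk_add, ofAdd_add]))
    (by
      intro x hx
      obtain ⟨k, rfl⟩ := Subgroup.mem_zpowers_iff.mp hx
      rw [MonoidHom.mem_ker]
      show Multiplicative.ofAdd (Submodule.Quotient.mk (Additive.ofMul (g ^ k) ⊗ₜ[ℤ]
        (MonoidAlgebra.single g 1 : MonoidAlgebra ℤ_[p] G)) : _ ⧸ NN p G) = 1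
      have hz : (Additive.ofMul (g ^ k) ⊗ₜ[ℤ] (MonoidAlgebra.single g 1 : MonoidAlgebra ℤ_[p] G)
          : Additive G ⊗[ℤ] MonoidAlgebra ℤ_[p] G) ∈ NN p G := by
        rw [ofMul_zpow, ← TensorProduct.smul_tmul']
        exact Submodule.smul_mem _ _
          (Submodule.subset_span ⟨g, 1, by rw [smul_of_eq_single]⟩)
      rw [(Submodule.Quotient.mk_eq_zero _).mpr hz, ofAdd_zero]))

theorem psicomp_mk (g x : G) :
    psicomp p G g (Additive.ofMul (QuotientGroup.mk x : G ⧸ Subgroup.zpowers g))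
      = Submodule.Quotient.mk
          (Additive.ofMul x ⊗ₜ[ℤ] (MonoidAlgebra.single g 1 : MonoidAlgebra ℤ_[p] G)) := rfl

noncomputable def psi : DD G →+ ((Additive G ⊗[ℤ] MonoidAlgebra ℤ_[p] G) ⧸ NN p G) :=
  DirectSum.toAddMonoid (fun g => psicomp p G g)

include hexp in
theorem phibar_psi (d : DD G) : phibar p G hexp (psi p G d) = d := by
  have h : ((phibar p G hexp).toAddMonoidHom.comp (psi p G)) = AddMonoidHom.id (DD G) := by
    refine DirectSum.addHom_ext fun g z => ?_
    obtain ⟨x, rfl⟩ : ∃ x : G,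
        Additive.ofMul (QuotientGroup.mk x : G ⧸ Subgroup.zpowers g) = z := by
      obtain ⟨x, hx⟩ := QuotientGroup.mk_surjective (Additive.toMul z)
      exact ⟨x, by rw [hx]; rfl⟩
    simp only [AddMonoidHom.coe_comp, Function.comp_apply, AddMonoidHom.id_apply,
      LinearMap.toAddMonoidHom_coe]
    rw [psi, DirectSum.toAddMonoid_of, psicomp_mk, phibar, Submodule.liftQ_apply]
    rw [phi_tmul, vv_one, one_smul]
    rfl
  exact DFunLike.congr_fun h d

include hexp in
theorem psi_phi (m : Additive G ⊗[ℤ] MonoidAlgebra ℤ_[p] G) :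
    psi p G (phi p G hexp m) = Submodule.Quotient.mk m := by
  have h : (psi p G).toIntLinearMap.comp (phi p G hexp) = Submodule.mkQ (NN p G) := by
    apply TensorProduct.ext'
    intro a f
    show psi p G (phi p G hexp (a ⊗ₜ f)) = Submodule.Quotient.mk (a ⊗ₜ f)
    induction f using MonoidAlgebra.induction with
    | zero => simp [TensorProduct.tmul_zero]
    | single_add g lam f _ _ ih =>
      rw [TensorProduct.tmul_add, map_add, map_add, Submodule.Quotient.mk_add, ih]
      congr 1
      rw [phi_tmul, psi, DirectSum.toAddMonoid_of, map_zsmul, map_zsmul]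
      have h2 : psicomp p G g (cg G g a) = Submodule.Quotient.mk
          (a ⊗ₜ[ℤ] (MonoidAlgebra.single g 1 : MonoidAlgebra ℤ_[p] G)) :=
        psicomp_mk p G g (Additive.toMul a)
      rw [h2, ← Submodule.Quotient.mk_smul, ← key p G hexp a g lam]
  exact LinearMap.congr_fun h m

end

/-- For `G` an elementary abelian `p`-group of rank `n`, the quotient of
`G ⊗_ℤ ℤ̂_p[G]` by the subgroup generated by the elements `g ⊗ λ·g` (`g ∈ G`,
`λ ∈ ℤ̂_p`) is isomorphic, as an abelian group, to `⊕_{g ∈ G} G/⟨g⟩`. -/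
theorem HC1_iso_directSum_quotients (p : ℕ) [Fact p.Prime] (n : ℕ) (G : Type*)
    [CommGroup G] [Fintype G] (hcard : Fintype.card G = p ^ n)
    (horder : ∀ g : G, g ≠ 1 → orderOf g = p) :
    letI N : Submodule ℤ (Additive G ⊗[ℤ] MonoidAlgebra ℤ_[p] G) :=
      Submodule.span ℤ
        {x | ∃ (g : G) (lam : ℤ_[p]),
          x = Additive.ofMul g ⊗ₜ[ℤ] (lam • MonoidAlgebra.of ℤ_[p] G g)}
    Nonempty (((Additive G ⊗[ℤ] MonoidAlgebra ℤ_[p] G) ⧸ N) ≃+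
      DirectSum G fun g : G => Additive (G ⧸ Subgroup.zpowers g)) := by
  letI := Classical.decEq G
  have hexp : ∀ a : Additive G, (p:ℤ) • a = 0 := by
    intro a
    have h1 : (Additive.toMul a) ^ (p:ℕ) = 1 := by
      by_cases h : Additive.toMul a = 1
      · rw [h, one_pow]
      · rw [← horder _ h]; exact pow_orderOf_eq_one _
    show (p:ℤ) • Additive.ofMul (Additive.toMul a) = 0
    rw [← ofMul_zpow, zpow_natCast, h1, ofMul_one]
  refine ⟨{ toFun := phibar p G hexp,
            invFun := psi p G,
            left_inv := ?_,
            right_inv := phibar_psi p G hexp,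
            map_add' := map_add _ }⟩
  intro y
  obtain ⟨m, rfl⟩ := Submodule.Quotient.mk_surjective _ y
  exact psi_phi p G hexp m
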